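/- The language L_3eq = { 0ⁿ 1ⁿ 2ⁿ : n ∈ ℕ, n ≥ 1 } over the alphabet {0,1,2} is CFL-immune; that is, L_3eq is infinite and no infinite subset of L_3eq is a context-free language. -/

import Mathlib

namespace CFLPump

open ContextFreeGrammar Symbol

variable {T : Type} {g : ContextFreeGrammar.{0} T}

/-- Parse "forest": `Der g l w d n` means the list of symbols `l` derives the terminal
word `w` via a parse forest of depth `d` and total size (number of rule applications) `n`. -/
inductive Der (g : ContextFreeGrammar.{0} T) :
    List (Symbol T g.NT) → List T → ℕ → ℕ → Prop
  | nil : Der g [] [] 0 0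
  | term {l w d n} (t : T) (h : Der g l w d n) :
      Der g (Symbol.terminal t :: l) (t :: w) d n
  | nt {r : ContextFreeRule T g.NT} {w d n l w' d' n'} (hr : r ∈ g.rules)
      (h : Der g r.output w d n) (h' : Der g l w' d' n') :
      Der g (Symbol.nonterminal r.input :: l) (w ++ w') (max (d+1) d') (n+1+n')

lemma Der.cast {l w d n n'} (h : Der g l w d n) (hn : n = n') : Der g l w d n' := hn ▸ h

lemma Der.append {l₁ w₁ d₁ n₁ l₂ w₂ d₂ n₂} (h₁ : Der g l₁ w₁ d₁ n₁) (h₂ : Der g l₂ w₂ d₂ n₂) :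
    ∃ d, Der g (l₁ ++ l₂) (w₁ ++ w₂) d (n₁ + n₂) := by
  induction h₁ with
  | nil => exact ⟨d₂, by simpa using h₂⟩
  | term t h ih =>
      obtain ⟨d, hd⟩ := ih
      exact ⟨d, hd.term t⟩
  | nt hr h h' ih ih' =>
      obtain ⟨d, hd⟩ := ih'
      have H := Der.nt hr h hd
      exact ⟨_, by
        rw [List.cons_append, List.append_assoc]
        exact H.cast (by omega)⟩

/-- A single nonterminal with a rule applied. -/
lemma Der.single {r : ContextFreeRule T g.NT} {w d n} (hr : r ∈ g.rules)
    (h : Der g r.output w d n) :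
    Der g [Symbol.nonterminal r.input] w (d+1) (n+1) := by
  have := Der.nt hr h (Der.nil (g := g))
  simpa using this

/-- Splitting a parse forest of an appended symbol list. -/
lemma Der.split {l₁ l₂ : List (Symbol T g.NT)} {w d n} (h : Der g (l₁ ++ l₂) w d n) :
    ∃ w₁ w₂ d₁ n₁ d₂ n₂, w = w₁ ++ w₂ ∧ n = n₁ + n₂ ∧
      Der g l₁ w₁ d₁ n₁ ∧ Der g l₂ w₂ d₂ n₂ := by
  induction l₁ generalizing w d n with
  | nil => exact ⟨[], w, 0, 0, d, n, rfl, by omega, Der.nil, h⟩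
  | cons s l₁ ih =>
      rw [List.cons_append] at h
      cases h with
      | term t h =>
          obtain ⟨w₁, w₂, d₁, n₁, d₂, n₂, rfl, rfl, hd₁, hd₂⟩ := ih h
          exact ⟨t :: w₁, w₂, d₁, n₁, d₂, n₂, rfl, rfl, hd₁.term t, hd₂⟩
      | nt hr hout h =>
          obtain ⟨w₁, w₂, d₁, n₁, d₂, n₂, rfl, rfl, hd₁, hd₂⟩ := ih h
          exact ⟨_ ++ w₁, w₂, _, _, d₂, n₂, by rw [List.append_assoc], by omega,
            Der.nt hr hout hd₁, hd₂⟩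

/-- the terminal word derives itself. -/
lemma der_self (w : List T) : Der g (w.map Symbol.terminal) w 0 0 := by
  induction w with
  | nil => exact Der.nil
  | cons t w ih => exact ih.term t

/-- Completeness: a `Derives` to a terminal word yields a parse forest. -/
lemma der_of_derives {l : List (Symbol T g.NT)} {w : List T}
    (h : g.Derives l (w.map Symbol.terminal)) : ∃ d n, Der g l w d n := by
  induction h using Relation.ReflTransGen.head_induction_on with
  | refl => exact ⟨0, 0, der_self w⟩
  | head hp _ ih =>
      obtain ⟨d, n, hd⟩ := ih
      obtain ⟨r, hr, hrw⟩ := hp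
      obtain ⟨p, q, rfl, rfl⟩ := hrw.exists_parts
      rw [List.append_assoc] at hd
      obtain ⟨w₁, w', d₁, n₁, d', n', rfl, rfl, hd₁, hd'⟩ := hd.split
      obtain ⟨w₂, w₃, d₂, n₂, d₃, n₃, rfl, rfl, hd₂, hd₃⟩ := hd'.split
      have h1 : Der g [Symbol.nonterminal r.input] w₂ (d₂+1) (n₂+1) := Der.single hr hd₂
      obtain ⟨da, ha⟩ := h1.append hd₃
      obtain ⟨db, hb⟩ := hd₁.append ha
      rw [List.append_assoc]
      exact ⟨db, _, hb⟩

/-- Soundness: a parse forest gives a derivation. -/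
lemma derives_of_der {l : List (Symbol T g.NT)} {w : List T} {d n} (h : Der g l w d n) :
    g.Derives l (w.map Symbol.terminal) := by
  induction h with
  | nil => exact Derives.refl []
  | term t h ih =>
      have := ih.append_left [Symbol.terminal t]
      simpa using this
  | nt hr h h' ih ih' =>
      refine Relation.ReflTransGen.head ⟨_, hr, ContextFreeRule.Rewrites.head _⟩ ?_
      rw [List.map_append]
      exact (ih.append_right _).trans (ih'.append_left _)

/-- A bound on rule right-hand sides (at least 2). -/
noncomputable def bnd (g : ContextFreeGrammar.{0} T) : ℕ :=
  2 + g.rules.sup (fun r => r.output.length)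

lemma out_le_bnd {r : ContextFreeRule T g.NT} (hr : r ∈ g.rules) : r.output.length ≤ bnd g :=
  le_trans (Finset.le_sup (f := fun r => r.output.length) hr) (by unfold bnd; omega)

lemma bnd_ge : 2 ≤ bnd g := by unfold bnd; omega

lemma Der.length_le {l w d n} (h : Der g l w d n) : w.length ≤ l.length * bnd g ^ d := by
  induction h with
  | nil => simp
  | term t h ih =>
      rename_i l' w' d' n'
      have h1 : 1 ≤ bnd g ^ d' := Nat.one_le_pow _ _ (by have := bnd_ge (g := g); omega)
      rw [List.length_cons, List.length_cons, Nat.succ_mul]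
      omega
  | nt hr h h' ih ih' =>
      have hb : 1 ≤ bnd g := by have := bnd_ge (g := g); omega
      rename_i r w d n l w' d' n'
      have h1 : w.length ≤ bnd g ^ (max (d+1) d') := by
        calc w.length ≤ r.output.length * bnd g ^ d := ih
          _ ≤ bnd g * bnd g ^ d := Nat.mul_le_mul_right _ (out_le_bnd hr)
          _ = bnd g ^ (d + 1) := (pow_succ' _ _).symm
          _ ≤ bnd g ^ (max (d+1) d') := Nat.pow_le_pow_right hb (le_max_left _ _)
      have h2 : w'.length ≤ l.length * bnd g ^ (max (d+1) d') :=
        le_trans ih' (Nat.mul_le_mul_left _ (Nat.pow_le_pow_right hb (le_max_right _ _)))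
      rw [List.length_append, List.length_cons, Nat.succ_mul]
      omega

/-- In a forest of positive depth, some nonterminal element realizes the maximal depth. -/
lemma Der.max_elem {l w d n} (h : Der g l w d n) (hd : 1 ≤ d) :
    ∃ (l₁ l₂ : List (Symbol T g.NT)) (B : g.NT) (w₁ wm w₂ : List T) (nm d₁ n₁ d₂ n₂ : ℕ),
      l = l₁ ++ Symbol.nonterminal B :: l₂ ∧ w = w₁ ++ wm ++ w₂ ∧ n = n₁ + nm + n₂ ∧
      Der g [Symbol.nonterminal B] wm d nm ∧ Der g l₁ w₁ d₁ n₁ ∧ Der g l₂ w₂ d₂ n₂ := by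
  induction h with
  | nil => omega
  | term t h ih =>
      obtain ⟨l₁, l₂, B, w₁, wm, w₂, nm, d₁, n₁, d₂, n₂, rfl, rfl, rfl, hm, h₁, h₂⟩ := ih hd
      exact ⟨Symbol.terminal t :: l₁, l₂, B, t :: w₁, wm, w₂, nm, d₁, n₁, d₂, n₂,
        rfl, rfl, rfl, hm, h₁.term t, h₂⟩
  | nt hr h h' ih ih' =>
      rename_i r w d n l w' d' n'
      rcases le_or_gt d' (d+1) with hle | hlt
      · refine ⟨[], l, r.input, [], w, w', n+1, 0, 0, d', n', rfl, rfl, by omega, ?_, Der.nil, h'⟩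
        rw [Nat.max_eq_left hle]
        exact Der.single hr h
      · obtain ⟨l₁, l₂, B, w₁, wm, w₂, nm, d₁, n₁, d₂, n₂, rfl, rfl, rfl, hm, h₁, h₂⟩ :=
          ih' (by omega)
        refine ⟨Symbol.nonterminal r.input :: l₁, l₂, B, w ++ w₁, wm, w₂, nm, _, _, d₂, n₂,
          rfl, by simp [List.append_assoc], by omega, ?_, Der.nt hr h h₁, h₂⟩
        rw [Nat.max_eq_right (by omega)]
        exact hm

/-- Inversion for a single-nonterminal parse tree. -/
lemma Der.single_inv {A : g.NT} {w d n} (h : Der g [Symbol.nonterminal A] w d n) :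
    ∃ r ∈ g.rules, r.input = A ∧ ∃ d₀ n₀, Der g r.output w d₀ n₀ ∧ d = d₀ + 1 ∧ n = n₀ + 1 := by
  cases h with
  | nt hr h h' =>
      cases h' with
      | nil => exact ⟨_, hr, rfl, _, _, by simpa using h, by omega, by omega⟩

/-- Tree contexts: `Sub g A B v x k` means there is a parse context rooted at `A` with a single
hole labelled `B`, yielding `v` to the left and `x` to the right of the hole, of size `k`. -/
inductive Sub (g : ContextFreeGrammar.{0} T) : g.NT → g.NT → List T → List T → ℕ → Prop
  | refl (A : g.NT) : Sub g A A [] [] 0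
  | step {r : ContextFreeRule T g.NT} {l₁ l₂ : List (Symbol T g.NT)} {B C : g.NT}
      {v₁ x₁ v₂ x₂ : List T} {d₁ d₂ n₁ n₂ k : ℕ}
      (hr : r ∈ g.rules)
      (hout : r.output = l₁ ++ Symbol.nonterminal B :: l₂)
      (h1 : Der g l₁ v₁ d₁ n₁) (h2 : Der g l₂ x₁ d₂ n₂)
      (hsub : Sub g B C v₂ x₂ k) :
      Sub g r.input C (v₁ ++ v₂) (x₂ ++ x₁) (1 + n₁ + n₂ + k)

lemma Sub.cast {A B v x k k'} (h : Sub g A B v x k) (hk : k = k') : Sub g A B v x k' := hk ▸ h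

lemma Sub.trans {A B C v x k v' x' k'} (h₁ : Sub g A B v x k) (h₂ : Sub g B C v' x' k') :
    Sub g A C (v ++ v') (x' ++ x) (k + k') := by
  induction h₁ with
  | refl => simpa using h₂
  | step hr hout hd₁ hd₂ hsub ih =>
      have H := Sub.step hr hout hd₁ hd₂ (ih h₂)
      rw [List.append_assoc, ← List.append_assoc x']
      exact H.cast (by omega)

lemma Sub.plug {A B v x k m dm nm} (hs : Sub g A B v x k)
    (h : Der g [Symbol.nonterminal B] m dm nm) :
    ∃ d, Der g [Symbol.nonterminal A] (v ++ m ++ x) d (k + nm) := by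
  induction hs with
  | refl => exact ⟨dm, by simpa using h⟩
  | @step r l₁ l₂ B' C' v₁ x₁ v₂ x₂ d₁ d₂ n₁ n₂ k' hr hout hd₁ hd₂ hsub ih =>
      obtain ⟨d, hd⟩ := ih h
      obtain ⟨da, ha⟩ := hd.append hd₂
      obtain ⟨db, hb⟩ := hd₁.append ha
      rw [List.singleton_append, ← hout] at hb
      have H := Der.single hr hb
      have H2 := H.cast (show n₁ + (k' + nm + n₂) + 1 = 1 + n₁ + n₂ + k' + nm by omega)
      exact ⟨db + 1, by simpa [List.append_assoc] using H2⟩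

open scoped Classical in
/-- The nonterminals that occur as inputs of rules. -/
noncomputable def inputs (g : ContextFreeGrammar.{0} T) : Finset g.NT :=
  g.rules.image (·.input)

/-- Walking down a maximal-depth path of a sufficiently deep parse tree, we find a repeated
nonterminal `B`, giving a pumpable decomposition. -/
lemma find_repeat (d : ℕ) : ∀ {A : g.NT} {w : List T} {n : ℕ},
    Der g [Symbol.nonterminal A] w d n →
    ∀ (S : Finset g.NT) (A₀ : g.NT) (u y : List T) (k₀ : ℕ),
    S ⊆ inputs g →
    Sub g A₀ A u y k₀ →
    (∀ X ∈ S, ∃ u₁ v₁ x₁ y₁ k₁ k₂, u = u₁ ++ v₁ ∧ y = x₁ ++ y₁ ∧ 1 ≤ k₂ ∧ k₁ + k₂ = k₀ ∧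
        Sub g A₀ X u₁ y₁ k₁ ∧ Sub g X A v₁ x₁ k₂) →
    (inputs g).card + 1 ≤ S.card + d →
    ∃ B u₁ v₁ m x₁ y₁ k₁ k₂ dm nm, 1 ≤ k₂ ∧ k₁ + k₂ + nm = k₀ + n ∧
      u ++ w ++ y = u₁ ++ v₁ ++ m ++ x₁ ++ y₁ ∧
      Sub g A₀ B u₁ y₁ k₁ ∧ Sub g B B v₁ x₁ k₂ ∧ Der g [Symbol.nonterminal B] m dm nm := by
  classical
  induction d using Nat.strong_induction_on with
  | _ d ih =>
    intro A w n hder S A₀ u y k₀ hS hsub₀ hprop hcard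
    by_cases hA : A ∈ S
    · obtain ⟨u₁, v₁, x₁, y₁, k₁, k₂, hu, hy, hk2, hk, hs1, hs2⟩ := hprop A hA
      exact ⟨A, u₁, v₁, w, x₁, y₁, k₁, k₂, d, n, hk2, by omega,
        by rw [hu, hy]; simp [List.append_assoc], hs1, hs2, hder⟩
    · have hSle : S.card ≤ (inputs g).card := Finset.card_le_card hS
      have hd1 : 1 ≤ d := by omega
      obtain ⟨d', rfl⟩ : ∃ d', d = d' + 1 := ⟨d - 1, by omega⟩
      obtain ⟨r, hr, hri, d₀, n₀, hder0, hdeq, hneq⟩ := hder.single_inv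
      have hd0 : d₀ = d' := by omega
      subst hd0
      have hAin : A ∈ inputs g := by
        rw [← hri]
        exact Finset.mem_image_of_mem _ hr
      have hSlt : S.card < (inputs g).card :=
        Finset.card_lt_card ((Finset.ssubset_iff_of_subset hS).2 ⟨A, hAin, hA⟩)
      have hd2 : 1 ≤ d₀ := by omega
      obtain ⟨l₁, l₂, B, w₁, wm, w₂, nm', dd₁, n₁, dd₂, n₂, hout, hweq, hn0, hm, hD1, hD2⟩ :=
        hder0.max_elem hd2
      have hstep : Sub g A B w₁ w₂ (1 + n₁ + n₂) := by
        have H := Sub.step hr hout hD1 hD2 (Sub.refl B)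
        rw [hri] at H
        simpa using H.cast (by omega)
      have hrec := ih d₀ (by omega) hm (insert A S) A₀ (u ++ w₁) (w₂ ++ y) (k₀ + (1 + n₁ + n₂))
        (Finset.insert_subset hAin hS) (hsub₀.trans hstep) ?_ ?_
      · obtain ⟨B', u₁, v₁, m, x₁, y₁, k₁, k₂, dm, nm, hk2, hsz, hword, hs1, hs2, hDm⟩ := hrec
        refine ⟨B', u₁, v₁, m, x₁, y₁, k₁, k₂, dm, nm, hk2, by omega, ?_, hs1, hs2, hDm⟩
        rw [hweq, ← hword]
        simp [List.append_assoc]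
      · intro X hX
        rcases Finset.mem_insert.1 hX with rfl | hXS
        · exact ⟨u, w₁, w₂, y, k₀, 1 + n₁ + n₂, rfl, rfl, by omega, rfl, hsub₀, hstep⟩
        · obtain ⟨u₁, v₁, x₁, y₁, k₁, k₂, hu, hy, hk2, hk, hs1, hs2⟩ := hprop X hXS
          exact ⟨u₁, v₁ ++ w₁, w₂ ++ x₁, y₁, k₁, k₂ + (1 + n₁ + n₂),
            by rw [hu, List.append_assoc], by rw [hy, List.append_assoc], by omega, by omega,
            hs1, hs2.trans hstep⟩
      · rw [Finset.card_insert_of_notMem hA]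
        omega

/-- Pumping-style lemma: every long enough word of a context-free language admits a
decomposition with a nonempty pumpable pair, and pumping up once stays in the language. -/
lemma pumping (g : ContextFreeGrammar.{0} T) :
    ∃ K, ∀ w ∈ g.language, K ≤ w.length →
      ∃ u v m x y : List T, w = u ++ v ++ m ++ x ++ y ∧ v ++ x ≠ [] ∧
        u ++ (v ++ v) ++ m ++ (x ++ x) ++ y ∈ g.language := by
  classical
  refine ⟨bnd g ^ ((inputs g).card + 1) + 1, ?_⟩
  intro w hw hlen
  rw [mem_language_iff] at hw
  have hex : ∃ n d, Der g [Symbol.nonterminal g.initial] w d n := by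
    obtain ⟨d, n, h⟩ := der_of_derives hw
    exact ⟨n, d, h⟩
  obtain ⟨d, hder⟩ := Nat.find_spec hex
  set n := Nat.find hex with hn
  have hmin : ∀ m, m < n → ¬ ∃ d, Der g [Symbol.nonterminal g.initial] w d m :=
    fun m hm => Nat.find_min hex hm
  have hb : 2 ≤ bnd g := bnd_ge
  have hlb : w.length ≤ 1 * bnd g ^ d := by simpa using hder.length_le
  have hd : (inputs g).card + 1 < d := by
    by_contra hc
    push_neg at hc
    have : bnd g ^ d ≤ bnd g ^ ((inputs g).card + 1) := Nat.pow_le_pow_right (by omega) hc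
    omega
  obtain ⟨B, u₁, v₁, m, x₁, y₁, k₁, k₂, dm, nm, hk2, hsz, hword, hsubAB, hsubBB, hmder⟩ :=
    find_repeat d hder ∅ g.initial [] [] 0 (by simp) (Sub.refl _) (by simp) (by simp; omega)
  simp only [List.nil_append, List.append_nil] at hword
  have hvx : v₁ ++ x₁ ≠ [] := by
    intro hnil
    obtain ⟨hv, hx⟩ := List.append_eq_nil_iff.mp hnil
    obtain ⟨d', hd'⟩ := hsubAB.plug hmder
    refine hmin (k₁ + nm) (by omega) ⟨d', ?_⟩
    rw [hword, hv, hx]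
    simpa using hd'
  refine ⟨u₁, v₁, m, x₁, y₁, hword, hvx, ?_⟩
  have hpump : Sub g B B (v₁ ++ v₁) (x₁ ++ x₁) (k₂ + k₂) := hsubBB.trans hsubBB
  obtain ⟨d1, h1⟩ := hpump.plug hmder
  obtain ⟨d2, h2⟩ := hsubAB.plug h1
  rw [mem_language_iff]
  have H := derives_of_der h2
  simpa [List.append_assoc] using H

end CFLPump

/-- `L` is CFL-immune: `L` is infinite and no infinite subset of `L` is context-free. -/
def CFLImmune {T : Type} (L : Language T) : Prop :=
  Set.Infinite (L : Set (List T)) ∧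
    ∀ M : Language T, M ≤ L → Set.Infinite (M : Set (List T)) → ¬ M.IsContextFree

/-- L_3eq = { 0ⁿ 1ⁿ 2ⁿ : n ≥ 1 } over the alphabet {0,1,2} (as `Fin 3`). -/
def L3eq : Language (Fin 3) :=
  {s | ∃ n : ℕ, 1 ≤ n ∧
    s = List.replicate n 0 ++ List.replicate n 1 ++ List.replicate n 2}

namespace CFLPump

/-- The canonical word `0ⁿ1ⁿ2ⁿ`. -/
def wrd (n : ℕ) : List (Fin 3) :=
  List.replicate n 0 ++ List.replicate n 1 ++ List.replicate n 2

lemma wrd_length (n : ℕ) : (wrd n).length = 3 * n := by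
  simp [wrd]; omega

lemma wrd_sorted (n : ℕ) : List.Pairwise (· ≤ ·) (wrd n) := by
  unfold wrd
  rw [List.pairwise_append, List.pairwise_append]
  refine ⟨⟨List.pairwise_replicate.2 (by simp), List.pairwise_replicate.2 (by simp), ?_⟩,
    List.pairwise_replicate.2 (by simp), ?_⟩
  · intro a ha b hb
    rw [List.eq_of_mem_replicate ha, List.eq_of_mem_replicate hb]
    decide
  · intro a ha b hb
    rw [List.eq_of_mem_replicate hb]
    rcases List.mem_append.1 ha with h | h <;>
      rw [List.eq_of_mem_replicate h] <;> decide

lemma wrd_count (n : ℕ) (c : Fin 3) : (wrd n).count c = n := by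
  fin_cases c <;> simp [wrd, List.count_append, List.count_replicate]

lemma no_pump {u v m x y : List (Fin 3)} (hw : (u ++ v ++ m ++ x ++ y) ∈ L3eq)
    (hvx : v ++ x ≠ []) (hp : u ++ (v ++ v) ++ m ++ (x ++ x) ++ y ∈ L3eq) : False := by
  obtain ⟨n, hn, he⟩ := hw
  obtain ⟨n', hn', he'⟩ := hp
  rw [show (List.replicate n (0:Fin 3) ++ List.replicate n 1 ++ List.replicate n 2) = wrd n
    from rfl] at he
  rw [show (List.replicate n' (0:Fin 3) ++ List.replicate n' 1 ++ List.replicate n' 2) = wrd n'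
    from rfl] at he'
  -- the pumped word is sorted, hence v and x are constant
  have hsort' : List.Pairwise (· ≤ ·) (u ++ (v ++ v) ++ m ++ (x ++ x) ++ y) :=
    he' ▸ wrd_sorted n'
  have hconst : ∀ (z zz : List (Fin 3)), z ++ z <:+: u ++ (v ++ v) ++ m ++ (x ++ x) ++ y →
      ∀ a ∈ z, ∀ b ∈ z, a = b := by
    intro z zz hinf a ha b hb
    have hpw : List.Pairwise (· ≤ ·) (z ++ z) := hsort'.sublist hinf.sublist
    have h1 := (List.pairwise_append.1 hpw).2.2
    exact le_antisymm (h1 a ha b hb) (h1 b hb a ha)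
  have hvconst : ∀ a ∈ v, ∀ b ∈ v, a = b :=
    hconst v v ⟨u, m ++ (x ++ x) ++ y, by simp [List.append_assoc]⟩
  have hxconst : ∀ a ∈ x, ∀ b ∈ x, a = b :=
    hconst x x ⟨u ++ (v ++ v) ++ m, y, by simp [List.append_assoc]⟩
  obtain ⟨c₁, hc₁⟩ : ∃ c, ∀ a ∈ v, a = c := by
    cases v with
    | nil => exact ⟨0, by simp⟩
    | cons a t => exact ⟨a, fun b hb => hvconst b hb a List.mem_cons_self⟩
  obtain ⟨c₂, hc₂⟩ : ∃ c, ∀ a ∈ x, a = c := by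
    cases x with
    | nil => exact ⟨0, by simp⟩
    | cons a t => exact ⟨a, fun b hb => hxconst b hb a List.mem_cons_self⟩
  -- counting
  have key : ∀ c : Fin 3, n + (v.count c + x.count c) = n' := by
    intro c
    have e1 := congrArg (List.count c) he
    have e2 := congrArg (List.count c) he'
    rw [wrd_count] at e1 e2
    simp only [List.count_append] at e1 e2
    omega
  obtain ⟨ℓ, hl1, hl2⟩ : ∃ ℓ : Fin 3, ℓ ≠ c₁ ∧ ℓ ≠ c₂ := by
    have : ∀ a b : Fin 3, ∃ c : Fin 3, c ≠ a ∧ c ≠ b := by decide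
    exact this c₁ c₂
  have hv0 : v.count ℓ = 0 := by
    rw [List.count_eq_zero]
    intro hmem
    exact hl1 (hc₁ ℓ hmem)
  have hx0 : x.count ℓ = 0 := by
    rw [List.count_eq_zero]
    intro hmem
    exact hl2 (hc₂ ℓ hmem)
  have hnn' : n = n' := by have := key ℓ; omega
  obtain ⟨a, ha⟩ := List.exists_mem_of_ne_nil _ hvx
  have hpos : 1 ≤ v.count a + x.count a := by
    rcases List.mem_append.1 ha with h | h
    · have := List.count_pos_iff.2 h
      omega
    · have := List.count_pos_iff.2 h
      omega
  have := key a
  omega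

end CFLPump

open CFLPump

/-- L_3eq is CFL-immune. -/
theorem L3eq_CFLImmune : CFLImmune L3eq := by
  constructor
  · apply Set.infinite_of_injective_forall_mem (f := fun n : ℕ => wrd (n + 1))
    · intro a b hab
      have := congrArg List.length hab
      rw [wrd_length, wrd_length] at this
      omega
    · intro n
      exact ⟨n + 1, by omega, rfl⟩
  · rintro M hML hMinf ⟨g, rfl⟩
    obtain ⟨K, hK⟩ := pumping g
    have hlong : ∃ w ∈ g.language, K ≤ w.length := by
      by_contra hc
      push_neg at hc
      exact hMinf (Set.Finite.subset (List.finite_length_lt (Fin 3) K)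
        (fun w hw => hc w hw))
    obtain ⟨w, hw, hlen⟩ := hlong
    obtain ⟨u, v, m, x, y, rfl, hvx, hpump⟩ := hK w hw hlen
    exact no_pump (hML hw) hvx (hML hpump)
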